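/- Let Λ be an Artin algebra and C a subcategory of mod Λ closed under direct sums with Φ-dim(C) = n < ∞. Then Ψ-dim(C) < ∞ if and only if fin.dim(add Ω^t C) < ∞ for some t ≥ n. -/

import Mathlib

open scoped Classical

/-- An abstract model of the category `mod Λ` of finitely generated left modules over
an Artin algebra `Λ`, presented through the Krull–Schmidt theorem: a finitely
generated module is (the isomorphism class of) a finite multiset of indecomposable
modules.  The data records which indecomposables are projective, and the multiset of
indecomposable direct summands of the syzygy of each indecomposable (the kernel of a
projective cover). -/
structure ModData where
  /-- iso classes of indecomposable finitely generated modules -/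
  Idec : Type
  /-- which indecomposables are projective -/
  proj : Idec → Prop
  /-- the syzygy of an indecomposable -/
  syz : Idec → Multiset Idec

namespace ModData

variable (Λ : ModData)

/-- finitely generated `Λ`-modules (multisets of indecomposables) -/
abbrev Mod := Multiset Λ.Idec

/-- the syzygy operator `Ω` (extended additively) -/
def Ω (X : Λ.Mod) : Λ.Mod := X.bind Λ.syz

/-- `X` is a projective module -/
def IsProj (X : Λ.Mod) : Prop := ∀ i ∈ X, Λ.proj i

/-- the projective dimension `pd X ∈ ℕ∞`: the least `m` with `Ω^[m] X` projective
(and `⊤` if there is no such `m`) -/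
noncomputable def pd (X : Λ.Mod) : ℕ∞ :=
  sInf ((fun m : ℕ => (m : ℕ∞)) '' {m : ℕ | Λ.IsProj (Λ.Ω^[m] X)})

/-- the free abelian group `K` on the iso classes of indecomposable non-projective
finitely generated modules -/
abbrev K := FreeAbelianGroup {i : Λ.Idec // ¬ Λ.proj i}

/-- the class `[X]` of an indecomposable in `K` (projectives are sent to `0`) -/
noncomputable def cls (i : Λ.Idec) : Λ.K :=
  if h : Λ.proj i then 0 else FreeAbelianGroup.of ⟨i, h⟩

/-- the class `[X] ∈ K` of a module `X` -/
noncomputable def clsM (X : Λ.Mod) : Λ.K := (X.map Λ.cls).sum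

/-- the endomorphism `L` of `K` with `L [X] = [Ω X]` -/
noncomputable def L : Λ.K →+ Λ.K :=
  FreeAbelianGroup.lift fun i => Λ.clsM (Λ.syz i.1)

/-- `⟨X⟩` : the subgroup of `K` generated by the classes of the indecomposable
non-projective direct summands of `X` -/
def gen (X : Λ.Mod) : AddSubgroup Λ.K :=
  AddSubgroup.closure (Λ.cls '' {i | i ∈ X})

/-- the rank of a subgroup of `K` -/
noncomputable def rk (H : AddSubgroup Λ.K) : Cardinal :=
  Module.rank ℤ (AddSubgroup.toIntSubmodule H)

/-- the iterated image `L^k H` of a subgroup of `K` -/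
noncomputable def Lpow (k : ℕ) (H : AddSubgroup Λ.K) : AddSubgroup Λ.K :=
  (fun H' => AddSubgroup.map Λ.L H')^[k] H

/-- the (first) Igusa–Todorov function
`Φ(X) = min {n | rk L^k⟨X⟩ = rk L^(k+1)⟨X⟩ for all k ≥ n}` -/
noncomputable def Phi (X : Λ.Mod) : ℕ :=
  sInf {n : ℕ | ∀ k, n ≤ k →
    Λ.rk (Λ.Lpow k (Λ.gen X)) = Λ.rk (Λ.Lpow (k + 1) (Λ.gen X))}

/-- `add C` : the closure of a class of modules under finite direct sums and
direct summands -/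
def addCl (C : Set Λ.Mod) : Set Λ.Mod :=
  {X | ∃ Y ∈ AddSubmonoid.closure C, X ≤ Y}

/-- `C ⊕ D` : the class of direct sums of a module of `C` and a module of `D` -/
def oplus (C D : Set Λ.Mod) : Set Λ.Mod :=
  {X | ∃ Y ∈ C, ∃ Z ∈ D, X = Y + Z}

/-- the finitistic dimension of a class:
`fin.dim C = sup {pd X | X ∈ C, pd X < ∞}` -/
noncomputable def findim (C : Set Λ.Mod) : ℕ∞ :=
  sSup (Λ.pd '' {X | X ∈ C ∧ Λ.pd X ≠ ⊤})

/-- the (second) Igusa–Todorov function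
`Ψ(X) = Φ(X) + fin.dim (add Ω^(Φ X) X)` -/
noncomputable def Psi (X : Λ.Mod) : ℕ∞ :=
  (Λ.Phi X : ℕ∞) + Λ.findim (Λ.addCl {Λ.Ω^[Λ.Phi X] X})

/-- the `Φ`-dimension of a class -/
noncomputable def PhiDim (C : Set Λ.Mod) : ℕ∞ := ⨆ X ∈ C, (Λ.Phi X : ℕ∞)

/-- the `Ψ`-dimension of a class -/
noncomputable def PsiDim (C : Set Λ.Mod) : ℕ∞ := ⨆ X ∈ C, Λ.Psi X

/-- `C` is an `(n,t,V,D)`-GLIT class, relative to the relation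
`ses X₁ X₀ Z` ↔ "there is a short exact sequence `0 → X₁ → X₀ → Z → 0`":
`D` is additively closed, `t`-syzygy invariant with `Φ`-dim`(D) < ∞`, and every
`C ∈ 𝒞` admits a s.e.s. `0 → V₁ ⊕ D₁ → V₀ ⊕ D₀ → Ω^n C → 0` with `Vᵢ ∈ add V`,
`Dᵢ ∈ D`. -/
def IsGLIT (ses : Λ.Mod → Λ.Mod → Λ.Mod → Prop) (C : Set Λ.Mod)
    (n t : ℕ) (V : Λ.Mod) (D : Set Λ.Mod) : Prop :=
  1 ≤ t ∧ Λ.addCl D = D ∧ (∀ X ∈ D, Λ.Ω^[t] X ∈ D) ∧ Λ.PhiDim D ≠ ⊤ ∧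
    ∀ X ∈ C, ∃ V₁ ∈ Λ.addCl {V}, ∃ V₀ ∈ Λ.addCl {V}, ∃ D₁ ∈ D, ∃ D₀ ∈ D,
      ses (V₁ + D₁) (V₀ + D₀) (Λ.Ω^[n] X)

/-- the subgroup of `K` generated by the classes of the summands of modules of `D` -/
noncomputable def relSub (D : Set Λ.Mod) : AddSubgroup Λ.K :=
  AddSubgroup.closure (Λ.cls '' {i | ∃ X ∈ D, i ∈ X})

/-- the rank of (the image of) a subgroup of `K` in the quotient of `K` by the
classes of modules of `D` -/
noncomputable def rkRel (D : Set Λ.Mod) (H : AddSubgroup Λ.K) : Cardinal :=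
  Module.rank ℤ
    ((AddSubgroup.toIntSubmodule H).map (AddSubgroup.toIntSubmodule (Λ.relSub D)).mkQ)

/-- the generalized Igusa–Todorov function `Φ_{[D]}` relative to a class `D`:
defined as `Φ`, but with ranks computed in the quotient of `K` by the subgroup
generated by the classes of modules in `D` (and of projectives) -/
noncomputable def PhiRel (D : Set Λ.Mod) (X : Λ.Mod) : ℕ :=
  sInf {n : ℕ | ∀ k, n ≤ k →
    Λ.rkRel D (Λ.Lpow k (Λ.gen X)) = Λ.rkRel D (Λ.Lpow (k + 1) (Λ.gen X))}


/-! ### Auxiliary lemmas -/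

section Aux

variable (Λ : ModData)

/-! #### Multiset and `Ω` lemmas -/

lemma omega_add (X Y : Λ.Mod) : Λ.Ω (X + Y) = Λ.Ω X + Λ.Ω Y :=
  Multiset.add_bind _ _ _

lemma omegaIter_add (k : ℕ) (X Y : Λ.Mod) :
    Λ.Ω^[k] (X + Y) = Λ.Ω^[k] X + Λ.Ω^[k] Y := by
  induction k generalizing X Y with
  | zero => rfl
  | succ k ih =>
    rw [Function.iterate_succ_apply, Function.iterate_succ_apply,
      Function.iterate_succ_apply, Λ.omega_add, ih]

lemma omegaIter_mono (k : ℕ) {X Y : Λ.Mod} (h : X ≤ Y) :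
    Λ.Ω^[k] X ≤ Λ.Ω^[k] Y := by
  obtain ⟨Z, rfl⟩ := Multiset.le_iff_exists_add.mp h
  rw [Λ.omegaIter_add]
  exact Multiset.le_add_right _ _

lemma omegaIter_nsmul (k m : ℕ) (X : Λ.Mod) :
    Λ.Ω^[k] (m • X) = m • Λ.Ω^[k] X := by
  induction m with
  | zero =>
    simp only [zero_nsmul]
    induction k with
    | zero => rfl
    | succ k ih =>
      rw [Function.iterate_succ_apply]
      have : Λ.Ω (0 : Λ.Mod) = 0 := Multiset.zero_bind _
      rw [this, ih]
  | succ m ih =>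
    rw [succ_nsmul, succ_nsmul, Λ.omegaIter_add, ih]

/-! #### `pd` lemmas -/

lemma pd_eq_coe_sInf (X : Λ.Mod) (h : {m : ℕ | Λ.IsProj (Λ.Ω^[m] X)}.Nonempty) :
    Λ.pd X = ((sInf {m : ℕ | Λ.IsProj (Λ.Ω^[m] X)} : ℕ) : ℕ∞) := by
  apply le_antisymm
  · exact sInf_le ⟨_, Nat.sInf_mem h, rfl⟩
  · apply le_sInf
    rintro _ ⟨m, hm, rfl⟩
    exact Nat.cast_le.mpr (Nat.sInf_le hm)

lemma pd_ne_top_iff (X : Λ.Mod) :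
    Λ.pd X ≠ ⊤ ↔ {m : ℕ | Λ.IsProj (Λ.Ω^[m] X)}.Nonempty := by
  constructor
  · intro h
    by_contra hne
    rw [Set.not_nonempty_iff_eq_empty] at hne
    apply h
    rw [pd, hne, Set.image_empty, sInf_empty]
  · intro h
    rw [Λ.pd_eq_coe_sInf X h]
    exact (ENat.coe_ne_top _)

/-! #### Finite generation and ranks -/

lemma toIntSubmodule_gen (X : Λ.Mod) :
    AddSubgroup.toIntSubmodule (Λ.gen X) =
      Submodule.span ℤ (Λ.cls '' {i | i ∈ X}) := by
  rw [gen, ← Submodule.span_int_eq_addSubgroupClosure,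
    Submodule.toAddSubgroup_toIntSubmodule]

lemma fg_gen (X : Λ.Mod) : (AddSubgroup.toIntSubmodule (Λ.gen X)).FG := by
  rw [Λ.toIntSubmodule_gen]
  apply Submodule.fg_span
  have h1 : {i | i ∈ X} = (X.toFinset : Set Λ.Idec) := by
    ext i; simp [Multiset.mem_toFinset]
  rw [h1]
  exact X.toFinset.finite_toSet.image _

lemma Lpow_zero (H : AddSubgroup Λ.K) : Λ.Lpow 0 H = H := rfl

lemma Lpow_succ (k : ℕ) (H : AddSubgroup Λ.K) :
    Λ.Lpow (k + 1) H = AddSubgroup.map Λ.L (Λ.Lpow k H) :=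
  Function.iterate_succ_apply' _ _ _

lemma fg_Lpow (k : ℕ) (H : AddSubgroup Λ.K)
    (hfg : (AddSubgroup.toIntSubmodule H).FG) :
    (AddSubgroup.toIntSubmodule (Λ.Lpow k H)).FG := by
  induction k with
  | zero => exact hfg
  | succ k ih =>
    rw [Λ.Lpow_succ, ← AddMonoidHom.coe_toIntLinearMap_map]
    exact Submodule.FG.map _ ih

lemma rk_map_le (H : AddSubgroup Λ.K) :
    Λ.rk (AddSubgroup.map Λ.L H) ≤ Λ.rk H := by
  rw [rk, rk, ← AddMonoidHom.coe_toIntLinearMap_map]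
  exact rank_map_le _ _

lemma rk_Lpow_anti (H : AddSubgroup Λ.K) {k l : ℕ} (h : k ≤ l) :
    Λ.rk (Λ.Lpow l H) ≤ Λ.rk (Λ.Lpow k H) := by
  induction l, h using Nat.le_induction with
  | base => exact le_rfl
  | succ l hl ih =>
    rw [Λ.Lpow_succ]
    exact (Λ.rk_map_le _).trans ih

lemma exists_stab (H : AddSubgroup Λ.K) :
    ∃ m : ℕ, ∀ k, m ≤ k → Λ.rk (Λ.Lpow k H) = Λ.rk (Λ.Lpow (k + 1) H) := by
  have hne : (Set.range fun k : ℕ => Λ.rk (Λ.Lpow k H)).Nonempty := ⟨_, 0, rfl⟩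
  obtain ⟨c, ⟨m, rfl⟩, hmin⟩ := Cardinal.lt_wf.has_min _ hne
  refine ⟨m, fun k hk => ?_⟩
  have h1 : Λ.rk (Λ.Lpow k H) ≤ Λ.rk (Λ.Lpow m H) := Λ.rk_Lpow_anti H hk
  have h2 : Λ.rk (Λ.Lpow (k + 1) H) ≤ Λ.rk (Λ.Lpow m H) :=
    Λ.rk_Lpow_anti H (hk.trans k.le_succ)
  have h3 := hmin _ ⟨k, rfl⟩
  have h4 := hmin _ ⟨k + 1, rfl⟩
  rw [le_antisymm h1 (not_lt.mp h3), le_antisymm h2 (not_lt.mp h4)]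

lemma Phi_mem (X : Λ.Mod) :
    ∀ k, Λ.Phi X ≤ k →
      Λ.rk (Λ.Lpow k (Λ.gen X)) = Λ.rk (Λ.Lpow (k + 1) (Λ.gen X)) := by
  have hne : {n : ℕ | ∀ k, n ≤ k →
      Λ.rk (Λ.Lpow k (Λ.gen X)) = Λ.rk (Λ.Lpow (k + 1) (Λ.gen X))}.Nonempty := by
    obtain ⟨m, hm⟩ := Λ.exists_stab (Λ.gen X)
    exact ⟨m, hm⟩
  exact Nat.sInf_mem hne

/-! #### Injectivity of `L` on stabilized subgroups -/

lemma L_injOn (H : AddSubgroup Λ.K)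
    (hfg : (AddSubgroup.toIntSubmodule H).FG)
    (hrk : Λ.rk (AddSubgroup.map Λ.L H) = Λ.rk H) :
    ∀ x ∈ H, Λ.L x = 0 → x = 0 := by
  haveI : Module.Free ℤ Λ.K := Module.Free.of_basis (FreeAbelianGroup.basis _)
  set p := AddSubgroup.toIntSubmodule H with hp
  set q := AddSubgroup.toIntSubmodule (AddSubgroup.map Λ.L H) with hqdef
  have hq : p.map Λ.L.toIntLinearMap = q := AddMonoidHom.coe_toIntLinearMap_map _ _
  haveI hpfin : Module.Finite ℤ p := Module.Finite.iff_fg.mpr hfg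
  haveI hqfin : Module.Finite ℤ q := Module.Finite.iff_fg.mpr (hq ▸ hfg.map _)
  have hrank : Module.rank ℤ q = Module.rank ℤ p := hrk
  let bp := Module.Free.chooseBasis ℤ p
  let bq := Module.Free.chooseBasis ℤ q
  have hcard : Cardinal.mk (Module.Free.ChooseBasisIndex ℤ q) =
      Cardinal.mk (Module.Free.ChooseBasisIndex ℤ p) := by
    rw [← Module.Free.rank_eq_card_chooseBasisIndex,
      ← Module.Free.rank_eq_card_chooseBasisIndex, hrank]
  obtain ⟨e⟩ := Cardinal.eq.mp hcard
  let iso : q ≃ₗ[ℤ] p := bq.equiv bp e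
  have hmem : ∀ x ∈ p, Λ.L.toIntLinearMap x ∈ q := fun x hx =>
    hq ▸ Submodule.mem_map_of_mem hx
  let f : p →ₗ[ℤ] q := Λ.L.toIntLinearMap.restrict hmem
  have hfsurj : Function.Surjective f := by
    rintro ⟨y, hy⟩
    rw [← hq] at hy
    obtain ⟨x, hx, hxy⟩ := hy
    exact ⟨⟨x, hx⟩, Subtype.ext hxy⟩
  have hgsurj : Function.Surjective ⇑(iso.toLinearMap ∘ₗ f) := by
    rw [LinearMap.coe_comp]
    exact iso.surjective.comp hfsurj
  have hginj : Function.Injective ⇑(iso.toLinearMap ∘ₗ f) :=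
    OrzechProperty.injective_of_surjective_endomorphism _ hgsurj
  have hfinj : Function.Injective f := by
    intro a b hab
    apply hginj
    simp only [LinearMap.comp_apply, hab]
  intro x hx hLx
  have hx' : x ∈ p := hx
  have h0 : f ⟨x, hx'⟩ = f ⟨0, p.zero_mem⟩ := by
    apply Subtype.ext
    rw [LinearMap.restrict_apply, LinearMap.restrict_apply]
    show Λ.L x = Λ.L 0
    rw [hLx, map_zero]
  exact congrArg Subtype.val (hfinj h0)

lemma rk_map_eq_of_injOn (H H' : AddSubgroup Λ.K) (hle : H' ≤ H)
    (hinj : ∀ x ∈ H, Λ.L x = 0 → x = 0) :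
    Λ.rk (AddSubgroup.map Λ.L H') = Λ.rk H' := by
  set p := AddSubgroup.toIntSubmodule H' with hp
  have hq : p.map Λ.L.toIntLinearMap =
      AddSubgroup.toIntSubmodule (AddSubgroup.map Λ.L H') :=
    AddMonoidHom.coe_toIntLinearMap_map _ _
  have hmem : ∀ x ∈ p, Λ.L.toIntLinearMap x ∈ p.map Λ.L.toIntLinearMap :=
    fun x hx => Submodule.mem_map_of_mem hx
  let f : p →ₗ[ℤ] (p.map Λ.L.toIntLinearMap) := Λ.L.toIntLinearMap.restrict hmem
  have hfsurj : Function.Surjective f := by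
    rintro ⟨y, hy⟩
    obtain ⟨x, hx, hxy⟩ := hy
    exact ⟨⟨x, hx⟩, Subtype.ext hxy⟩
  have hfinj : Function.Injective f := by
    rintro ⟨a, ha⟩ ⟨b, hb⟩ hab
    apply Subtype.ext
    have h1 : Λ.L a = Λ.L b := by
      have := congrArg Subtype.val hab
      rwa [LinearMap.restrict_apply, LinearMap.restrict_apply] at this
    have h2 : Λ.L (a - b) = 0 := by rw [map_sub, h1, sub_self]
    have h3 : a - b ∈ H' := sub_mem ha hb
    have h4 : a - b = 0 := hinj _ (hle h3) h2
    exact sub_eq_zero.mp h4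
  have equiv := LinearEquiv.ofBijective f ⟨hfinj, hfsurj⟩
  rw [rk, rk, ← hq]
  exact equiv.rank_eq.symm

/-! #### Monotonicity of `Φ` -/

lemma gen_mono {X Y : Λ.Mod} (h : X ≤ Y) : Λ.gen X ≤ Λ.gen Y :=
  AddSubgroup.closure_mono
    (Set.image_mono fun i hi => Multiset.mem_of_le h hi)

lemma Lpow_mono (k : ℕ) {H H' : AddSubgroup Λ.K} (h : H' ≤ H) :
    Λ.Lpow k H' ≤ Λ.Lpow k H := by
  induction k with
  | zero => exact h
  | succ k ih =>
    rw [Λ.Lpow_succ, Λ.Lpow_succ]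
    exact AddSubgroup.map_mono ih

lemma Phi_mono {X Y : Λ.Mod} (h : X ≤ Y) : Λ.Phi X ≤ Λ.Phi Y := by
  apply Nat.sInf_le
  intro k hk
  have hinj := Λ.L_injOn (Λ.Lpow k (Λ.gen Y))
    (Λ.fg_Lpow k (Λ.gen Y) (Λ.fg_gen Y))
    (by rw [← Λ.Lpow_succ]; exact (Λ.Phi_mem Y k hk).symm)
  have := Λ.rk_map_eq_of_injOn (Λ.Lpow k (Λ.gen Y)) (Λ.Lpow k (Λ.gen X))
    (Λ.Lpow_mono k (Λ.gen_mono h)) hinj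
  rw [Λ.Lpow_succ]
  exact this.symm

/-! #### `addCl` lemmas -/

lemma exists_nsmul_of_mem_closure {W W' : Λ.Mod}
    (h : W' ∈ AddSubmonoid.closure ({W} : Set Λ.Mod)) : ∃ m : ℕ, W' = m • W := by
  induction h using AddSubmonoid.closure_induction with
  | mem x hx => exact ⟨1, by rw [Set.mem_singleton_iff.mp hx, one_nsmul]⟩
  | zero => exact ⟨0, (zero_nsmul W).symm⟩
  | add x y hx hy ihx ihy =>
    obtain ⟨m1, rfl⟩ := ihx
    obtain ⟨m2, rfl⟩ := ihy
    exact ⟨m1 + m2, (add_nsmul W m1 m2).symm⟩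

lemma mem_closure_image {C : Set Λ.Mod}
    (hC : ∀ X ∈ C, ∀ Y ∈ C, X + Y ∈ C) (k : ℕ) {W' : Λ.Mod}
    (h : W' ∈ AddSubmonoid.closure (Λ.Ω^[k] '' C)) :
    W' = 0 ∨ ∃ X ∈ C, W' ≤ Λ.Ω^[k] X := by
  induction h using AddSubmonoid.closure_induction with
  | mem x hx =>
    obtain ⟨X, hX, rfl⟩ := hx
    exact Or.inr ⟨X, hX, le_rfl⟩
  | zero => exact Or.inl rfl
  | add x y hx hy ihx ihy =>
    rcases ihx with rfl | ⟨X1, h1, hle1⟩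
    · rw [zero_add]; exact ihy
    · rcases ihy with rfl | ⟨X2, h2, hle2⟩
      · rw [add_zero]; exact Or.inr ⟨X1, h1, hle1⟩
      · refine Or.inr ⟨X1 + X2, hC X1 h1 X2 h2, ?_⟩
        rw [Λ.omegaIter_add]
        exact add_le_add hle1 hle2

end Aux

end ModData

/-- for `C` closed under direct sums with `Φ-dim C = n < ∞`,
`Ψ-dim C < ∞` if and only if `fin.dim (add Ω^t C) < ∞` for some `t ≥ n`. -/
theorem PsiDim_finite_iff_findim_syzygies_finite (Λ : ModData) (C : Set Λ.Mod)
    (hC : ∀ X ∈ C, ∀ Y ∈ C, X + Y ∈ C)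
    (n : ℕ) (hn : Λ.PhiDim C = (n : ℕ∞)) :
    Λ.PsiDim C ≠ ⊤ ↔ ∃ t : ℕ, n ≤ t ∧ Λ.findim (Λ.addCl (Λ.Ω^[t] '' C)) ≠ ⊤ := by
  have hPhile : ∀ X ∈ C, Λ.Phi X ≤ n := by
    intro X hX
    have h1 : (Λ.Phi X : ℕ∞) ≤ Λ.PhiDim C :=
      le_iSup₂ (f := fun X (_ : X ∈ C) => ((Λ.Phi X : ℕ∞))) X hX
    rw [hn] at h1
    exact_mod_cast h1
  constructor
  · -- forward: take `t = n`
    intro hs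
    refine ⟨n, le_rfl, ne_top_of_le_ne_top hs ?_⟩
    apply sSup_le
    rintro _ ⟨Y, ⟨⟨W', hW', hle⟩, hpd⟩, rfl⟩
    rcases Λ.mem_closure_image hC n hW' with rfl | ⟨X, hX, hWle⟩
    · -- `Y = 0`
      have hY0 : Y = 0 := Multiset.le_zero.mp hle
      subst hY0
      have h0 : Λ.pd (0 : Λ.Mod) ≤ (0 : ℕ∞) := by
        refine sInf_le ⟨0, ?_, rfl⟩
        intro i hi
        exact absurd hi (Multiset.notMem_zero i)
      exact h0.trans zero_le
    · have hYle : Y ≤ Λ.Ω^[n] X := hle.trans hWle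
      -- choose `Y₀ ∈ C` attaining `Φ Y₀ = n`
      obtain ⟨Y₀, hY₀C, hY₀⟩ : ∃ Y₀ ∈ C, Λ.Phi Y₀ = n := by
        by_contra hcon
        push_neg at hcon
        have hlt : ∀ Z ∈ C, Λ.Phi Z < n := fun Z hZ =>
          lt_of_le_of_ne (hPhile Z hZ) (hcon Z hZ)
        cases n with
        | zero => exact absurd (hlt X hX) (Nat.not_lt_zero _)
        | succ m =>
          have hle' : Λ.PhiDim C ≤ (m : ℕ∞) := by
            apply iSup₂_le
            intro Z hZ
            exact_mod_cast Nat.lt_succ_iff.mp (hlt Z hZ)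
          rw [hn] at hle'
          have : (m + 1 : ℕ) ≤ m := by exact_mod_cast hle'
          omega
      set Z := X + Y₀ with hZdef
      have hZC : Z ∈ C := hC X hX Y₀ hY₀C
      have hPhiZ : Λ.Phi Z = n :=
        le_antisymm (hPhile Z hZC) (hY₀ ▸ Λ.Phi_mono (Multiset.le_add_left Y₀ X))
      have hmem : Y ∈ Λ.addCl {Λ.Ω^[n] Z} := by
        refine ⟨Λ.Ω^[n] Z, AddSubmonoid.subset_closure rfl, hYle.trans ?_⟩
        rw [hZdef, Λ.omegaIter_add]
        exact Multiset.le_add_right _ _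
      have h1 : Λ.pd Y ≤ Λ.findim (Λ.addCl {Λ.Ω^[n] Z}) :=
        le_sSup ⟨Y, ⟨hmem, hpd⟩, rfl⟩
      have h2 : Λ.findim (Λ.addCl {Λ.Ω^[n] Z}) ≤ Λ.Psi Z := by
        rw [ModData.Psi, hPhiZ]
        exact le_add_self
      have h3 : Λ.Psi Z ≤ Λ.PsiDim C :=
        le_iSup₂ (f := fun X (_ : X ∈ C) => Λ.Psi X) Z hZC
      exact h1.trans (h2.trans h3)
  · -- backward
    rintro ⟨t, hnt, hb⟩
    set b := Λ.findim (Λ.addCl (Λ.Ω^[t] '' C)) with hbdef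
    have hbound : Λ.PsiDim C ≤ (t : ℕ∞) + b := by
      apply iSup₂_le
      intro X hX
      have hφt : Λ.Phi X ≤ t := (hPhile X hX).trans hnt
      set φ := Λ.Phi X with hφdef
      set u := t - φ with hu
      have hfd : Λ.findim (Λ.addCl {Λ.Ω^[φ] X}) ≤ (u : ℕ∞) + b := by
        apply sSup_le
        rintro _ ⟨Y, ⟨⟨W', hW', hle⟩, hpd⟩, rfl⟩
        obtain ⟨m, rfl⟩ := Λ.exists_nsmul_of_mem_closure hW'
        have hSne := (Λ.pd_ne_top_iff Y).mp hpd
        set d := sInf {m : ℕ | Λ.IsProj (Λ.Ω^[m] Y)} with hd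
        have hpdY : Λ.pd Y = (d : ℕ∞) := Λ.pd_eq_coe_sInf Y hSne
        by_cases hdu : d ≤ u
        · rw [hpdY]
          exact le_add_right (by exact_mod_cast hdu)
        · push_neg at hdu
          have hud : u ≤ d := hdu.le
          have hdmem : Λ.IsProj (Λ.Ω^[d] Y) := Nat.sInf_mem hSne
          have hiter : ∀ m' : ℕ, Λ.Ω^[m'] (Λ.Ω^[u] Y) = Λ.Ω^[m' + u] Y :=
            fun m' => (Function.iterate_add_apply _ _ _ _).symm
          have hmem2 : (d - u) ∈ {m' : ℕ | Λ.IsProj (Λ.Ω^[m'] (Λ.Ω^[u] Y))} := by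
            show Λ.IsProj (Λ.Ω^[d - u] (Λ.Ω^[u] Y))
            rw [hiter, Nat.sub_add_cancel hud]
            exact hdmem
          have hSne2 : {m' : ℕ | Λ.IsProj (Λ.Ω^[m'] (Λ.Ω^[u] Y))}.Nonempty :=
            ⟨d - u, hmem2⟩
          have hsInf2 : sInf {m' : ℕ | Λ.IsProj (Λ.Ω^[m'] (Λ.Ω^[u] Y))} = d - u := by
            apply le_antisymm (Nat.sInf_le hmem2)
            apply le_csInf hSne2
            intro m' hm'
            have hm'2 : Λ.IsProj (Λ.Ω^[m' + u] Y) := by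
              rw [← hiter]
              exact hm'
            have : d ≤ m' + u := Nat.sInf_le hm'2
            omega
          have hpdu : Λ.pd (Λ.Ω^[u] Y) = ((d - u : ℕ) : ℕ∞) := by
            rw [Λ.pd_eq_coe_sInf _ hSne2, hsInf2]
          have hmemb : Λ.Ω^[u] Y ∈ Λ.addCl (Λ.Ω^[t] '' C) := by
            have hmemc : Λ.Ω^[t] X ∈ AddSubmonoid.closure (Λ.Ω^[t] '' C) :=
              AddSubmonoid.subset_closure ⟨X, hX, rfl⟩
            refine ⟨m • Λ.Ω^[t] X, nsmul_mem hmemc m, ?_⟩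
            have h1 : Λ.Ω^[u] Y ≤ Λ.Ω^[u] (m • Λ.Ω^[φ] X) := Λ.omegaIter_mono u hle
            rwa [Λ.omegaIter_nsmul, ← Function.iterate_add_apply,
              Nat.sub_add_cancel hφt] at h1
          have hble : Λ.pd (Λ.Ω^[u] Y) ≤ b := by
            refine le_sSup ⟨Λ.Ω^[u] Y, ⟨hmemb, ?_⟩, rfl⟩
            rw [hpdu]
            exact ENat.coe_ne_top _
          rw [hpdu] at hble
          rw [hpdY]
          calc (d : ℕ∞) = ((u + (d - u) : ℕ) : ℕ∞) := by
                rw [Nat.add_sub_cancel' hud]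
            _ = (u : ℕ∞) + ((d - u : ℕ) : ℕ∞) := by push_cast; ring
            _ ≤ (u : ℕ∞) + b := add_le_add_right hble _
      calc Λ.Psi X = (φ : ℕ∞) + Λ.findim (Λ.addCl {Λ.Ω^[φ] X}) := rfl
        _ ≤ (φ : ℕ∞) + ((u : ℕ∞) + b) := add_le_add_right hfd _
        _ = ((φ + u : ℕ) : ℕ∞) + b := by push_cast; ring
        _ = (t : ℕ∞) + b := by rw [hu, Nat.add_sub_cancel' hφt]
    refine ne_top_of_le_ne_top ?_ hbound
    intro htop
    rcases WithTop.add_eq_top.mp htop with h | h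
    · exact (ENat.coe_ne_top t) h
    · exact hb h
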